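/- For all real numbers λ_1 > λ_2 > 0, ∫_0^{2π} λ_1 λ_2 cos²(α) sin²(α) / (λ_1 cos²(α) + λ_2 sin²(α))² dα = 2π (−λ_1 λ_2 + (1/2) √(λ_1 λ_2) (λ_1 + λ_2)) / (λ_1 − λ_2)². -/

import Mathlib

open MeasureTheory Real

set_option maxHeartbeats 1000000 in
/-- For λ₁ > λ₂ > 0,
∫₀^{2π} λ₁ λ₂ cos²α sin²α / (λ₁ cos²α + λ₂ sin²α)² dα
  = 2π (−λ₁λ₂ + ½ √(λ₁λ₂) (λ₁ + λ₂)) / (λ₁ − λ₂)². -/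
theorem sscm_angular_integral_mixed (l₁ l₂ : ℝ) (h₂ : 0 < l₂) (h₁₂ : l₂ < l₁) :
    ∫ α in (0 : ℝ)..(2 * π),
        l₁ * l₂ * Real.cos α ^ 2 * Real.sin α ^ 2
          / (l₁ * Real.cos α ^ 2 + l₂ * Real.sin α ^ 2) ^ 2
      = 2 * π * (-(l₁ * l₂) + (1 / 2) * Real.sqrt (l₁ * l₂) * (l₁ + l₂)) / (l₁ - l₂) ^ 2 := by
  have h₁ : 0 < l₁ := h₂.trans h₁₂
  set p := Real.sqrt l₁ with hp_def
  set q := Real.sqrt l₂ with hq_def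
  have hp : 0 < p := Real.sqrt_pos.mpr h₁
  have hq : 0 < q := Real.sqrt_pos.mpr h₂
  have hp2 : p ^ 2 = l₁ := Real.sq_sqrt h₁.le
  have hq2 : q ^ 2 = l₂ := Real.sq_sqrt h₂.le
  have hne : l₁ - l₂ ≠ 0 := by linarith
  have hD : ∀ α : ℝ, 0 < l₁ * Real.cos α ^ 2 + l₂ * Real.sin α ^ 2 := by
    intro α
    nlinarith [Real.sin_sq_add_cos_sq α, mul_nonneg (sub_nonneg.mpr h₁₂.le) (sq_nonneg (Real.cos α)), h₂]
  have hqp : q ≤ p := Real.sqrt_le_sqrt h₁₂.le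
  have hM : ∀ α : ℝ, 0 < p * Real.cos α ^ 2 + q * Real.sin α ^ 2 := by
    intro α
    nlinarith [Real.sin_sq_add_cos_sq α, mul_nonneg (sub_nonneg.mpr hqp) (sq_nonneg (Real.cos α)), hq]
  set K := l₁ * l₂ / (l₁ - l₂) ^ 2 with hK
  set A := (l₁ + l₂) / (2 * (p * q)) with hA
  set B := (l₁ - l₂) / 2 with hB
  set F : ℝ → ℝ := fun α =>
    K * (-α + A * (α + Real.arctan ((q - p) * Real.sin α * Real.cos α /
          (p * Real.cos α ^ 2 + q * Real.sin α ^ 2)))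
      + B * (Real.sin α * Real.cos α / (l₁ * Real.cos α ^ 2 + l₂ * Real.sin α ^ 2))) with hF
  have key : ∀ α : ℝ, HasDerivAt F
      (l₁ * l₂ * Real.cos α ^ 2 * Real.sin α ^ 2
        / (l₁ * Real.cos α ^ 2 + l₂ * Real.sin α ^ 2) ^ 2) α := by
    intro α
    set s := Real.sin α with hs_def
    set c := Real.cos α with hc_def
    have hsc : s ^ 2 + c ^ 2 = 1 := Real.sin_sq_add_cos_sq α
    have hs : HasDerivAt Real.sin c α := Real.hasDerivAt_sin α
    have hc : HasDerivAt Real.cos (-s) α := Real.hasDerivAt_cos α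
    have hDα : (0:ℝ) < l₁ * c ^ 2 + l₂ * s ^ 2 := hD α
    have hMα : (0:ℝ) < p * c ^ 2 + q * s ^ 2 := hM α
    -- derivative of N = (q-p) sin cos
    have hN : HasDerivAt (fun x => (q - p) * Real.sin x * Real.cos x)
        ((q - p) * (c * c + s * (-s))) α := by
      have := ((hs.const_mul (q - p)).mul hc)
      exact this.congr_deriv (by ring)
    -- derivative of M = p cos^2 + q sin^2
    have hMd : HasDerivAt (fun x => p * Real.cos x ^ 2 + q * Real.sin x ^ 2)
        (p * (2 * c * (-s)) + q * (2 * s * c)) α := by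
      have h1 : HasDerivAt (fun x => Real.cos x ^ 2) (2 * c * (-s)) α := by
        simpa using (hc.fun_pow 2)
      have h2 : HasDerivAt (fun x => Real.sin x ^ 2) (2 * s * c) α := by
        simpa using (hs.fun_pow 2)
      exact (h1.const_mul p).add (h2.const_mul q)
    -- derivative of D = l₁ cos^2 + l₂ sin^2
    have hDd : HasDerivAt (fun x => l₁ * Real.cos x ^ 2 + l₂ * Real.sin x ^ 2)
        (l₁ * (2 * c * (-s)) + l₂ * (2 * s * c)) α := by
      have h1 : HasDerivAt (fun x => Real.cos x ^ 2) (2 * c * (-s)) α := by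
        simpa using (hc.fun_pow 2)
      have h2 : HasDerivAt (fun x => Real.sin x ^ 2) (2 * s * c) α := by
        simpa using (hs.fun_pow 2)
      exact (h1.const_mul l₁).add (h2.const_mul l₂)
    -- quotient N/M
    have hquot : HasDerivAt (fun x => (q - p) * Real.sin x * Real.cos x /
        (p * Real.cos x ^ 2 + q * Real.sin x ^ 2))
        (((q - p) * (c * c + s * (-s)) * (p * c ^ 2 + q * s ^ 2)
          - (q - p) * s * c * (p * (2 * c * (-s)) + q * (2 * s * c)))
          / (p * c ^ 2 + q * s ^ 2) ^ 2) α := hN.div hMd hMα.ne'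
    have harctan := hquot.arctan
    -- derivative of sc/D
    have hscD : HasDerivAt (fun x => Real.sin x * Real.cos x /
        (l₁ * Real.cos x ^ 2 + l₂ * Real.sin x ^ 2))
        (((c * c + s * (-s)) * (l₁ * c ^ 2 + l₂ * s ^ 2)
          - s * c * (l₁ * (2 * c * (-s)) + l₂ * (2 * s * c)))
          / (l₁ * c ^ 2 + l₂ * s ^ 2) ^ 2) α := by
      have hsc' : HasDerivAt (fun x => Real.sin x * Real.cos x) (c * c + s * (-s)) α :=
        hs.mul hc
      exact hsc'.div hDd hDα.ne'
    have hid : HasDerivAt id 1 α := hasDerivAt_id α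
    have hF' := ((((hid.neg).add (((hid.add harctan)).const_mul A)).add
        (hscD.const_mul B)).const_mul K)
    have hMN : (p*c^2+q*s^2)^2 + ((q-p)*s*c)^2 = p^2*c^2+q^2*s^2 := by
      linear_combination (p^2*c^2+q^2*s^2)*hsc
    refine hF'.congr_deriv ?_
    symm
    rw [hK, hA, hB]
    rw [← hp2, ← hq2]
    have hDne : (p^2 * c ^ 2 + q^2 * s ^ 2) ≠ 0 := by rw [hp2, hq2]; exact hDα.ne'
    have hMne : (p * c ^ 2 + q * s ^ 2) ≠ 0 := hMα.ne'
    have hu : 1 + ((q - p) * s * c / (p * c ^ 2 + q * s ^ 2)) ^ 2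
        = (p^2 * c ^ 2 + q^2 * s ^ 2) / (p * c ^ 2 + q * s ^ 2)^2 := by
      field_simp
      linear_combination hMN
    rw [hu]
    have hred : ∀ X : ℝ, 1 / ((p^2 * c ^ 2 + q^2 * s ^ 2) / (p * c ^ 2 + q * s ^ 2)^2)
        * (X / (p * c ^ 2 + q * s ^ 2) ^ 2) = X / (p^2 * c ^ 2 + q^2 * s ^ 2) := by
      intro X
      rw [one_div_div, div_mul_div_comm]
      rw [mul_comm (p^2 * c ^ 2 + q^2 * s ^ 2)]
      rw [← div_div]
      congr 1
      rw [mul_comm]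
      exact mul_div_cancel_right₀ X (pow_ne_zero 2 hMne)
    rw [hred]
    rw [show (q - p) * (c * c + s * -s) * (p * c ^ 2 + q * s ^ 2)
          - (q - p) * s * c * (p * (2 * c * -s) + q * (2 * s * c))
        = (q - p) * (p * c ^ 2 - q * s ^ 2) from by
      linear_combination ((q - p) * (p * c ^ 2 - q * s ^ 2)) * hsc]
    rw [show (c * c + s * -s) * (p ^ 2 * c ^ 2 + q ^ 2 * s ^ 2)
          - s * c * (p ^ 2 * (2 * c * -s) + q ^ 2 * (2 * s * c))
        = (c ^ 2 - s ^ 2) * (p ^ 2 * c ^ 2 + q ^ 2 * s ^ 2)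
            - 2 * (q ^ 2 - p ^ 2) * (s ^ 2 * c ^ 2) from by ring]
    have hqpne : q ^ 2 - p ^ 2 ≠ 0 := by nlinarith
    generalize hd : p ^ 2 * c ^ 2 + q ^ 2 * s ^ 2 = d
    have hdne : d ≠ 0 := hd ▸ hDne
    have hc2 : c ^ 2 = (q ^ 2 - d) / (q ^ 2 - p ^ 2) := by
      rw [eq_div_iff hqpne]
      linear_combination q ^ 2 * hsc - hd
    have hs2 : s ^ 2 = (d - p ^ 2) / (q ^ 2 - p ^ 2) := by
      rw [eq_div_iff hqpne]
      linear_combination hd - p ^ 2 * hsc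
    rw [hc2, hs2]
    have hpqne2 : p ^ 2 - q ^ 2 ≠ 0 := by nlinarith
    field_simp [hdne, hqpne, hp.ne', hq.ne', hpqne2]
    ring
  have hInt : IntervalIntegrable (fun α =>
      l₁ * l₂ * Real.cos α ^ 2 * Real.sin α ^ 2
        / (l₁ * Real.cos α ^ 2 + l₂ * Real.sin α ^ 2) ^ 2) volume 0 (2 * π) := by
    apply Continuous.intervalIntegrable
    apply Continuous.div
    · fun_prop
    · fun_prop
    · intro x
      exact pow_ne_zero 2 (hD x).ne'
  rw [intervalIntegral.integral_eq_sub_of_hasDerivAt (fun x _ => key x) hInt]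
  have hpq : p * q = Real.sqrt (l₁ * l₂) := (Real.sqrt_mul h₁.le l₂).symm
  have hpq0 : 0 < p * q := mul_pos hp hq
  have hpq2 : (p * q) ^ 2 = l₁ * l₂ := by rw [mul_pow, hp2, hq2]
  simp only [hF]
  rw [Real.sin_zero, Real.cos_zero, Real.sin_two_pi, Real.cos_two_pi]
  norm_num
  rw [hK, hA, ← hpq]
  field_simp
  linear_combination (-(l₁ + l₂)) * hpq2
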